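/- If F : Ω → ℂ^k satisfies ‖DF(z)‖² ≤ K Σ_{i=1}^k (|∂_z f_i(z)|² − |∂_{z̄} f_i(z)|²) at a point z of differentiability, then |∂_{z̄} F(z)| ≤ √((2K−1)/(2K+1)) |∂_z F(z)|. -/

import Mathlib

/-- Wirtinger derivative `∂_z` of a real-linear map `D = DF(z) : ℂ → ℂ^k`. -/
noncomputable def wirtingerZ {k : ℕ} (D : ℂ →L[ℝ] EuclideanSpace ℂ (Fin k)) :
    EuclideanSpace ℂ (Fin k) :=
  (2 : ℂ)⁻¹ • (D 1 - Complex.I • D Complex.I)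

/-- Wirtinger derivative `∂_z̄` of a real-linear map `D = DF(z) : ℂ → ℂ^k`. -/
noncomputable def wirtingerZbar {k : ℕ} (D : ℂ →L[ℝ] EuclideanSpace ℂ (Fin k)) :
    EuclideanSpace ℂ (Fin k) :=
  (2 : ℂ)⁻¹ • (D 1 + Complex.I • D Complex.I)

lemma aux_real (K a b : ℝ) (hK : 1 ≤ K) (ha : 0 ≤ a) (hb : 0 ≤ b)
    (h : a ^ 2 + b ^ 2 ≤ K * (a ^ 2 - b ^ 2)) :
    b ≤ Real.sqrt ((2 * K - 1) / (2 * K + 1)) * a := by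
  have hB2 : b ^ 2 ≤ (2 * K - 1) / (2 * K + 1) * a ^ 2 := by
    have h2 : b ^ 2 * (2 * K + 1) ≤ (2 * K - 1) * a ^ 2 := by nlinarith
    rw [div_mul_eq_mul_div, le_div_iff₀ (by linarith)]
    exact h2
  have hratio : (0:ℝ) ≤ (2 * K - 1) / (2 * K + 1) :=
    div_nonneg (by linarith) (by linarith)
  calc b = Real.sqrt (b ^ 2) := by rw [Real.sqrt_sq hb]
    _ ≤ Real.sqrt ((2 * K - 1) / (2 * K + 1) * a ^ 2) := Real.sqrt_le_sqrt hB2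
    _ = Real.sqrt ((2 * K - 1) / (2 * K + 1)) * a := by
        rw [Real.sqrt_mul hratio, Real.sqrt_sq ha]

lemma norm_sq_eq_sum {k : ℕ} (x : EuclideanSpace ℂ (Fin k)) :
    ‖x‖ ^ 2 = ∑ i, (‖x i‖) ^ 2 := by
  rw [EuclideanSpace.norm_eq, Real.sq_sqrt (by positivity)]

/-- If `F : Ω → ℂ^k` satisfies `‖DF(z)‖² ≤ K ∑ᵢ (|∂_z fᵢ(z)|² − |∂_z̄ fᵢ(z)|²)` at a point `z`
of differentiability, then `|∂_z̄ F(z)| ≤ √((2K−1)/(2K+1)) |∂_z F(z)|`. -/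
theorem symplectic_distortion_implies_dilatation (k : ℕ) (K : ℝ) (hK : 1 ≤ K)
    (Ω : Set ℂ) (F : ℂ → EuclideanSpace ℂ (Fin k)) (z : ℂ) (hz : z ∈ Ω)
    (hdiff : DifferentiableAt ℝ F z)
    (hdist : ‖fderiv ℝ F z‖ ^ 2 ≤
      K * ∑ i, ((‖wirtingerZ (fderiv ℝ F z) i‖) ^ 2
        - (‖wirtingerZbar (fderiv ℝ F z) i‖) ^ 2)) :
    ‖wirtingerZbar (fderiv ℝ F z)‖ ≤
      Real.sqrt ((2 * K - 1) / (2 * K + 1)) * ‖wirtingerZ (fderiv ℝ F z)‖ := by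
  set D := fderiv ℝ F z with hD
  set A := wirtingerZ D with hA
  set B := wirtingerZbar D with hB
  set u := D 1 with hu
  set v := Complex.I • D Complex.I with hv
  -- rewrite the sum
  have hsum : ∑ i, ((‖A i‖) ^ 2 - (‖B i‖) ^ 2)
      = ‖A‖ ^ 2 - ‖B‖ ^ 2 := by
    rw [Finset.sum_sub_distrib, norm_sq_eq_sum A, norm_sq_eq_sum B]
  rw [hsum] at hdist
  -- norms of A and B
  have hnA : ‖A‖ = 2⁻¹ * ‖u - v‖ := by
    rw [hA]
    show ‖(2 : ℂ)⁻¹ • (u - v)‖ = 2⁻¹ * ‖u - v‖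
    rw [norm_smul]
    norm_num
  have hnB : ‖B‖ = 2⁻¹ * ‖u + v‖ := by
    rw [hB]
    show ‖(2 : ℂ)⁻¹ • (u + v)‖ = 2⁻¹ * ‖u + v‖
    rw [norm_smul]
    norm_num
  have hnv : ‖v‖ = ‖D Complex.I‖ := by
    rw [hv, norm_smul, Complex.norm_I, one_mul]
  have hule : ‖u‖ ≤ ‖D‖ := by simpa using D.le_opNorm 1
  have hvle : ‖v‖ ≤ ‖D‖ := by
    rw [hnv]
    simpa [Complex.norm_I] using D.le_opNorm Complex.I
  have hpar := parallelogram_law_with_norm ℂ u v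
  -- ‖A‖² + ‖B‖² ≤ ‖D‖²
  have hDlow : ‖A‖ ^ 2 + ‖B‖ ^ 2 ≤ ‖D‖ ^ 2 := by
    have h0 : (0:ℝ) ≤ ‖u‖ := norm_nonneg _
    have h1 : (0:ℝ) ≤ ‖v‖ := norm_nonneg _
    nlinarith [norm_nonneg (u - v), norm_nonneg (u + v), sq_nonneg (‖u‖ - ‖v‖)]
  have hkey : ‖A‖ ^ 2 + ‖B‖ ^ 2 ≤ K * (‖A‖ ^ 2 - ‖B‖ ^ 2) := le_trans hDlow hdist
  exact aux_real K ‖A‖ ‖B‖ hK (norm_nonneg _) (norm_nonneg _) hkey
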